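/- The Taylor coefficients c_n of f(z) = ((1−yz)/(1−z))^{1/(1−y)} around z = 0 satisfy c_0 = 1, c_1 = 1, and the recurrence n·y·c_n + (n+2)·c_{n+2} = (2 + n + y + n·y)·c_{n+1} for n ≥ 0. -/

import Mathlib

open Complex Set Metric


lemma idw_open {s : Set ℂ} (hs : IsOpen s) {x : ℂ} (hx : x ∈ s) (n : ℕ) (f : ℂ → ℂ) :
    iteratedDerivWithin n f s x = iteratedDeriv n f x := by
  rw [iteratedDerivWithin_eq_iteratedFDerivWithin, iteratedDeriv_eq_iteratedFDeriv,
    iteratedFDerivWithin_of_isOpen n hs hx]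

lemma aux_id_mul {s : Set ℂ} (hs : IsOpen s) (h0 : (0:ℂ) ∈ s) :
    ∀ (n : ℕ) (h : ℂ → ℂ), AnalyticOnNhd ℂ h s →
      iteratedDeriv (n+1) (fun z => z * h z) 0 = ((n:ℂ)+1) * iteratedDeriv n h 0 := by
  intro n
  induction n with
  | zero =>
    intro h hh
    rw [iteratedDeriv_one]
    have := ((hasDerivAt_id (0:ℂ)).mul ((hh 0 h0).differentiableAt.hasDerivAt)).deriv
    simp only [one_mul, zero_mul, add_zero, id] at this
    simp [this]
    exact this
  | succ n IH =>
    intro h hh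
    have hd : Set.EqOn (deriv fun z => z * h z) (fun z => h z + z * deriv h z) s := by
      intro z hz
      have := ((hasDerivAt_id z).mul ((hh z hz).differentiableAt.hasDerivAt)).deriv
      simp only [one_mul, id] at this
      exact this
    have hg : AnalyticOnNhd ℂ (deriv h) s := hh.deriv
    rw [iteratedDeriv_succ', hd.iteratedDeriv_of_isOpen hs (n+1) h0]
    have hsplit : (fun z => h z + z * deriv h z) = h + (fun z => z * deriv h z) := rfl
    rw [hsplit, ← idw_open hs h0,
      iteratedDerivWithin_add h0 hs.uniqueDiffOn
        (((hh.contDiffOn hs.uniqueDiffOn).of_le le_top).contDiffWithinAt h0)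
        ((((analyticOnNhd_id.mul hg).contDiffOn hs.uniqueDiffOn).of_le le_top).contDiffWithinAt h0),
      idw_open hs h0, idw_open hs h0, IH _ hg, ← iteratedDeriv_succ']
    push_cast
    ring

lemma aux_sq_mul {s : Set ℂ} (hs : IsOpen s) (h0 : (0:ℂ) ∈ s)
    (n : ℕ) (h : ℂ → ℂ) (hh : AnalyticOnNhd ℂ h s) :
    iteratedDeriv (n+2) (fun z => z^2 * h z) 0
      = ((n:ℂ)+2) * ((n:ℂ)+1) * iteratedDeriv n h 0 := by
  have e : (fun z : ℂ => z^2 * h z) = (fun z => z * (z * h z)) := by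
    funext z; ring
  rw [e, aux_id_mul hs h0 (n+1) _ (analyticOnNhd_id.mul hh), aux_id_mul hs h0 n h hh]
  push_cast
  ring

lemma aux_sq_mul_one {s : Set ℂ} (hs : IsOpen s) (h0 : (0:ℂ) ∈ s)
    (h : ℂ → ℂ) (hh : AnalyticOnNhd ℂ h s) :
    iteratedDeriv 1 (fun z => z^2 * h z) 0 = 0 := by
  rw [iteratedDeriv_one]
  have := ((hasDerivAt_pow 2 (0:ℂ)).mul ((hh 0 h0).differentiableAt.hasDerivAt)).deriv
  simp at this
  exact this


/-- The function `((1 - y z)/(1 - z))^(1/(1-y))` defined via the principal logarithm. -/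
noncomputable def hyperpyramidF (y : ℂ) : ℂ → ℂ := fun z =>
  Complex.exp ((1 / (1 - y)) * (Complex.log (1 - y * z) - Complex.log (1 - z)))

/-- The `n`-th Taylor coefficient of `hyperpyramidF y` at `0`. -/
noncomputable def hyperpyramidCoeff (y : ℂ) (n : ℕ) : ℂ :=
  iteratedDeriv n (hyperpyramidF y) 0 / (Nat.factorial n : ℂ)

theorem hyperpyramid_coeff_recurrence (y : ℂ) (hy : ‖y‖ < 1) :
    hyperpyramidCoeff y 0 = 1 ∧ hyperpyramidCoeff y 1 = 1 ∧
      ∀ n : ℕ, (n : ℂ) * y * hyperpyramidCoeff y n +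
          ((n : ℂ) + 2) * hyperpyramidCoeff y (n + 2) =
        (2 + (n : ℂ) + y + (n : ℂ) * y) * hyperpyramidCoeff y (n + 1) := by
  set s : Set ℂ := Metric.ball 0 1 with hs_def
  have hs : IsOpen s := Metric.isOpen_ball
  have h0 : (0:ℂ) ∈ s := by simp [hs_def]
  set f := hyperpyramidF y with hf_def
  -- membership facts
  have hy1 : (1:ℂ) - y ≠ 0 := by
    intro h
    have : y = 1 := by linear_combination -h
    rw [this] at hy; simp at hy
  have hz_slit : ∀ z ∈ s, (1 - z) ∈ slitPlane := by
    intro z hz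
    have : ‖-z‖ < 1 := by simpa [hs_def, Metric.mem_ball, dist_eq_norm] using hz
    simpa [sub_eq_add_neg] using mem_slitPlane_of_norm_lt_one this
  have hyz_slit : ∀ z ∈ s, (1 - y * z) ∈ slitPlane := by
    intro z hz
    have hz1 : ‖z‖ < 1 := by simpa [hs_def, Metric.mem_ball, dist_eq_norm] using hz
    have : ‖-(y * z)‖ < 1 := by
      rw [norm_neg, norm_mul]
      calc ‖y‖ * ‖z‖ ≤ ‖y‖ * 1 := by
            exact mul_le_mul_of_nonneg_left hz1.le (norm_nonneg _)
        _ = ‖y‖ := mul_one _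
        _ < 1 := hy
    simpa [sub_eq_add_neg] using mem_slitPlane_of_norm_lt_one this
  have hz0 : ∀ z ∈ s, (1:ℂ) - z ≠ 0 := fun z hz => slitPlane_ne_zero (hz_slit z hz)
  have hyz0 : ∀ z ∈ s, (1:ℂ) - y * z ≠ 0 := fun z hz => slitPlane_ne_zero (hyz_slit z hz)
  -- analyticity
  have ha1 : AnalyticOnNhd ℂ (fun z : ℂ => 1 - y * z) s :=
    analyticOnNhd_const.sub (analyticOnNhd_const.mul analyticOnNhd_id)
  have ha2 : AnalyticOnNhd ℂ (fun z : ℂ => 1 - z) s :=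
    analyticOnNhd_const.sub analyticOnNhd_id
  have hf_an : AnalyticOnNhd ℂ f s := by
    rw [hf_def]
    unfold hyperpyramidF
    exact ((analyticOnNhd_const.mul ((ha1.clog hyz_slit).sub (ha2.clog hz_slit)))).cexp
  -- the ODE
  have hder : ∀ z ∈ s, HasDerivAt f
      (f z * ((1 / (1 - y)) * ((1 - y * z)⁻¹ * (-y) - (1 - z)⁻¹ * (-1)))) z := by
    intro z hz
    have d1 : HasDerivAt (fun w : ℂ => 1 - y * w) (-y) z := by
      simpa using ((hasDerivAt_id' z).const_mul y).const_sub 1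
    have d2 : HasDerivAt (fun w : ℂ => 1 - w) (-1 : ℂ) z := by
      simpa using (hasDerivAt_id' z).const_sub 1
    have l1 : HasDerivAt (fun w : ℂ => Complex.log (1 - y * w)) ((1 - y * z)⁻¹ * (-y)) z := by
      have := (Complex.hasDerivAt_log (hyz_slit z hz)).comp z d1; exact this
    have l2 : HasDerivAt (fun w : ℂ => Complex.log (1 - w)) ((1 - z)⁻¹ * (-1)) z :=
      (Complex.hasDerivAt_log (hz_slit z hz)).comp z d2
    have inner : HasDerivAt
        (fun w : ℂ => (1 / (1 - y)) * (Complex.log (1 - y * w) - Complex.log (1 - w)))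
        ((1 / (1 - y)) * ((1 - y * z)⁻¹ * (-y) - (1 - z)⁻¹ * (-1))) z :=
      (l1.sub l2).const_mul _
    exact inner.cexp
  set g := deriv f with hg_def
  have hg_an : AnalyticOnNhd ℂ g s := hf_an.deriv
  -- f = P * g on s where P z = 1 - (1+y) z + y z^2
  have hPg : Set.EqOn f
      (fun z => g z + (-(1+y)) * (z * g z) + y * (z^2 * g z)) s := by
    intro z hz
    have hd := (hder z hz).deriv
    have hz0' := hz0 z hz
    have hyz0' := hyz0 z hz
    have hc : ((1:ℂ) - z) * (1 - y * z) *
        ((1 / (1 - y)) * ((1 - y * z)⁻¹ * (-y) - (1 - z)⁻¹ * (-1))) = 1 := by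
      have e1 : (1 - y*z) * (1 - y*z)⁻¹ = 1 := mul_inv_cancel₀ hyz0'
      have e2 : (1 - z) * (1 - z)⁻¹ = 1 := mul_inv_cancel₀ hz0'
      have e3 : (1 - y) * (1/(1-y)) = 1 := mul_one_div_cancel hy1
      linear_combination (1/(1-y)*(-y)*(1-z)) * e1 + (1/(1-y)*(1-y*z)) * e2 + e3
    have : ((1:ℂ) - z) * (1 - y * z) * g z = f z := by
      rw [hg_def, hd]
      calc ((1:ℂ) - z) * (1 - y * z) *
            (f z * ((1 / (1 - y)) * ((1 - y * z)⁻¹ * (-y) - (1 - z)⁻¹ * (-1))))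
          = f z * (((1:ℂ) - z) * (1 - y * z) *
            ((1 / (1 - y)) * ((1 - y * z)⁻¹ * (-y) - (1 - z)⁻¹ * (-1)))) := by ring
        _ = f z := by rw [hc, mul_one]
    simp only
    linear_combination -this
  -- key identity on iterated derivatives
  have key : ∀ n : ℕ, iteratedDeriv (n+1) f 0 =
      iteratedDeriv (n+2) f 0 - (1+y) * ((n:ℂ)+1) * iteratedDeriv (n+1) f 0
        + y * ((n:ℂ)+1) * (n:ℂ) * iteratedDeriv n f 0 := by
    intro n
    have u : UniqueDiffOn ℂ s := hs.uniqueDiffOn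
    have sq_term : y * iteratedDeriv (n+1) (fun z => z^2 * g z) 0
        = y * ((n:ℂ)+1) * (n:ℂ) * iteratedDeriv n f 0 := by
      cases n with
      | zero =>
        rw [aux_sq_mul_one hs h0 g hg_an]
        push_cast; ring
      | succ m =>
        rw [aux_sq_mul hs h0 m g hg_an, hg_def, ← iteratedDeriv_succ']
        push_cast; ring
    have E0 : iteratedDeriv (n+1) f 0 = iteratedDerivWithin (n+1)
        ((fun z => g z + -(1+y)*(z*g z)) + (fun z => y*(z^2*g z))) s 0 := by
      rw [idw_open hs h0]
      exact hPg.iteratedDeriv_of_isOpen hs (n+1) h0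
    have E1 : iteratedDerivWithin (n+1)
          ((fun z => g z + -(1+y)*(z*g z)) + (fun z => y*(z^2*g z))) s 0
        = iteratedDerivWithin (n+1) (fun z => g z + -(1+y)*(z*g z)) s 0
          + iteratedDerivWithin (n+1) (fun z => y*(z^2*g z)) s 0 :=
      iteratedDerivWithin_add h0 u
        (by exact ((hg_an.add ((analyticOnNhd_const.mul (analyticOnNhd_id.mul hg_an)))).contDiffOn
          u).of_le le_top |>.contDiffWithinAt h0)
        (by exact ((analyticOnNhd_const.mul ((analyticOnNhd_id.pow 2).mul hg_an)).contDiffOn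
          u).of_le le_top |>.contDiffWithinAt h0)
    have E2 : iteratedDerivWithin (n+1) (g + (fun z => -(1+y)*(z*g z))) s 0
        = iteratedDerivWithin (n+1) g s 0
          + iteratedDerivWithin (n+1) (fun z => -(1+y)*(z*g z)) s 0 :=
      iteratedDerivWithin_add h0 u
        (by exact (hg_an.contDiffOn u).of_le le_top |>.contDiffWithinAt h0)
        (by exact ((analyticOnNhd_const.mul (analyticOnNhd_id.mul hg_an)).contDiffOn
          u).of_le le_top |>.contDiffWithinAt h0)
    have E3 : iteratedDerivWithin (n+1) (fun z => -(1+y)*(z*g z)) s 0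
        = -(1+y) * iteratedDerivWithin (n+1) (fun z => z * g z) s 0 :=
      iteratedDerivWithin_const_mul h0 u _
        (by exact ((analyticOnNhd_id.mul hg_an).contDiffOn u).of_le le_top |>.contDiffWithinAt h0)
    have E4 : iteratedDerivWithin (n+1) (fun z => y*(z^2*g z)) s 0
        = y * iteratedDerivWithin (n+1) (fun z => z^2 * g z) s 0 :=
      iteratedDerivWithin_const_mul h0 u _
        (by exact (((analyticOnNhd_id.pow 2).mul hg_an).contDiffOn u).of_le le_top |>.contDiffWithinAt h0)
    conv_lhs => rw [E0, E1,
      show (fun z => g z + -(1+y)*(z*g z)) = (g + fun z => -(1+y)*(z*g z)) from rfl,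
      E2, E3, E4, idw_open hs h0, idw_open hs h0, idw_open hs h0,
      aux_id_mul hs h0 n g hg_an]
    conv_lhs => rw [show y * iteratedDeriv (n+1) (fun z => z^2 * g z) 0
        = y * ((n:ℂ)+1) * (n:ℂ) * iteratedDeriv n f 0 from sq_term]
    conv_lhs => rw [hg_def, ← iteratedDeriv_succ', ← iteratedDeriv_succ']
    ring
  -- c0 = 1
  have hf0 : f 0 = 1 := by
    rw [hf_def]; unfold hyperpyramidF; simp
  have hc0 : hyperpyramidCoeff y 0 = 1 := by
    unfold hyperpyramidCoeff
    rw [iteratedDeriv_zero]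
    simpa using hf0
  -- c1 = 1
  have hD1 : iteratedDeriv 1 f 0 = 1 := by
    rw [iteratedDeriv_one, (hder 0 h0).deriv]
    rw [hf0]
    field_simp
    ring
  have hc1 : hyperpyramidCoeff y 1 = 1 := by
    unfold hyperpyramidCoeff
    rw [hD1]; simp
  refine ⟨hc0, hc1, fun n => ?_⟩
  have hfac : ∀ k : ℕ, ((Nat.factorial k : ℂ)) ≠ 0 := fun k => by
    exact_mod_cast Nat.factorial_ne_zero k
  have hK := key n
  have hG : (n:ℂ) * y * ((n:ℂ)+1) * iteratedDeriv n f 0 + iteratedDeriv (n+2) f 0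
      = (2 + (n:ℂ) + y + (n:ℂ)*y) * iteratedDeriv (n+1) f 0 := by
    linear_combination -hK
  have dd : ∀ k : ℕ, iteratedDeriv k f 0 = (Nat.factorial k : ℂ) * hyperpyramidCoeff y k := by
    intro k
    unfold hyperpyramidCoeff
    rw [mul_div_cancel₀ _ (hfac k)]
  have d0 := dd n
  have d1 := dd (n+1)
  have d2 := dd (n+2)
  have f1 : (Nat.factorial (n+1) : ℂ) = ((n:ℂ)+1) * Nat.factorial n := by
    push_cast [Nat.factorial_succ]; ring
  have f2 : (Nat.factorial (n+2) : ℂ) = ((n:ℂ)+2) * (((n:ℂ)+1) * Nat.factorial n) := by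
    rw [show n+2 = (n+1)+1 from rfl]
    push_cast [Nat.factorial_succ]; ring
  rw [d0, d1, d2, f1, f2] at hG
  have hne : ((n:ℂ)+1) * (Nat.factorial n : ℂ) ≠ 0 :=
    mul_ne_zero (Nat.cast_add_one_ne_zero n) (hfac n)
  apply mul_left_cancel₀ hne
  linear_combination hG
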